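/- The resolvent S_r is a firmly nonexpansive-type mapping: for any x, y ∈ E, ⟨S_r x − S_r y, J(S_r x) − J(S_r y)⟩ ≤ ⟨S_r x − S_r y, Jx − Jy⟩. -/
import Mathlib


open Set Filter

/-- The resolvent is firmly nonexpansive-type:
`⟨S_r x − S_r y, J(S_r x) − J(S_r y)⟩ ≤ ⟨S_r x − S_r y, Jx − Jy⟩`. -/
theorem equilibrium_resolvent_firmly_nonexpansive_type
    {E : Type*} [NormedAddCommGroup E] [NormedSpace ℝ E] [CompleteSpace E]
    [StrictConvexSpace ℝ E]
    (hrefl : Function.Surjective (NormedSpace.inclusionInDoubleDual ℝ E))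
    (J : E → (E →L[ℝ] ℝ))
    (hJ1 : ∀ x : E, J x x = ‖x‖ ^ 2)
    (hJ2 : ∀ x : E, ‖J x‖ = ‖x‖)
    (C : Set E) (hC : C.Nonempty) (hCc : IsClosed C) (hCv : Convex ℝ C)
    (F : E → E → ℝ)
    (hA1 : ∀ x ∈ C, F x x = 0)
    (hA2 : ∀ x ∈ C, ∀ y ∈ C, F x y + F y x ≤ 0)
    (hA3 : ∀ x ∈ C, ∀ y ∈ C, ∀ z ∈ C,
      Filter.limsup (fun t : ℝ => F (t • z + (1 - t) • x) y) (nhdsWithin 0 (Ioi 0))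
        ≤ F x y)
    (hA4 : ∀ x ∈ C, ConvexOn ℝ C (F x) ∧ LowerSemicontinuousOn (F x) C)
    (r : ℝ) (hr : 0 < r)
    (S : E → E)
    (hS : ∀ x : E, S x ∈ C ∧
      ∀ y ∈ C, F (S x) y + (1 / r) * ((J (S x) - J x) (y - S x)) ≥ 0)
    (x y : E) :
    (J (S x) - J (S y)) (S x - S y) ≤ (J x - J y) (S x - S y) := by
  obtain ⟨hxC, hx⟩ := hS x
  obtain ⟨hyC, hy⟩ := hS y
  have h1 := hx (S y) hyC
  have h2 := hy (S x) hxC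
  have h3 := hA2 (S x) hxC (S y) hyC
  simp only [ContinuousLinearMap.sub_apply, map_sub] at *
  have hr' : (0:ℝ) < 1 / r := by positivity
  nlinarith [mul_nonneg hr'.le (neg_nonneg.mpr h3)]
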